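/- Let f be a positive differentiable function on [0,1) and a, b real numbers such that for all r ∈ [0,1), -((a+br)/(1-r²))·f(r) ≤ f'(r) ≤ ((a-br)/(1-r²))·f(r). Then for all 0 ≤ r' ≤ r < 1, f(r) ≥ ((1+r)/(1+r'))^(-a) · ((1-r²)/(1-r'²))^((b+a)/2) · f(r'). -/

import Mathlib

theorem stmt3 (f f' : ℝ → ℝ) (a b : ℝ)
    (hpos : ∀ r ∈ Set.Ico (0:ℝ) 1, 0 < f r)
    (hderiv : ∀ r ∈ Set.Ico (0:ℝ) 1, HasDerivAt f (f' r) r)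
    (hlb : ∀ r ∈ Set.Ico (0:ℝ) 1, -((a + b * r) / (1 - r ^ 2)) * f r ≤ f' r)
    (hub : ∀ r ∈ Set.Ico (0:ℝ) 1, f' r ≤ ((a - b * r) / (1 - r ^ 2)) * f r)
    (r' r : ℝ) (h0 : 0 ≤ r') (h1 : r' ≤ r) (h2 : r < 1) :
    f r ≥ ((1 + r) / (1 + r')) ^ (-a) * ((1 - r ^ 2) / (1 - r' ^ 2)) ^ ((b + a) / 2) * f r' := by
  have hr0 : (0:ℝ) ≤ r := le_trans h0 h1
  have hr'1 : r' < 1 := lt_of_le_of_lt h1 h2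
  set G : ℝ → ℝ := fun t => ((b - a) / 2) * Real.log (1 + t) + ((b + a) / 2) * Real.log (1 - t)
    with hG
  have hGd : ∀ t ∈ Set.Ico (0:ℝ) 1, HasDerivAt G (-((a + b * t) / (1 - t ^ 2))) t := by
    intro t ht
    obtain ⟨ht0, ht1⟩ := ht
    have hp : (0:ℝ) < 1 + t := by linarith
    have hm : (0:ℝ) < 1 - t := by linarith
    have d1 : HasDerivAt (fun s => Real.log (1 + s)) (1 / (1 + t)) t := by
      have := ((hasDerivAt_id t).const_add 1).log (ne_of_gt hp)
      simpa using this
    have d2 : HasDerivAt (fun s => Real.log (1 - s)) (-1 / (1 - t)) t := by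
      have := ((hasDerivAt_id t).const_sub 1).log (ne_of_gt hm)
      simpa using this
    have := (d1.const_mul ((b - a) / 2)).add (d2.const_mul ((b + a) / 2))
    refine this.congr_deriv ?_
    have h12 : 1 - t ^ 2 = (1 - t) * (1 + t) := by ring
    rw [h12]
    field_simp
    ring
  set h : ℝ → ℝ := fun t => f t * Real.exp (-G t) with hh
  have hhd : ∀ t ∈ Set.Ico (0:ℝ) 1,
      HasDerivAt h ((f' t + (a + b * t) / (1 - t ^ 2) * f t) * Real.exp (-G t)) t := by
    intro t ht
    have := (hderiv t ht).mul ((hGd t ht).neg.exp)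
    refine this.congr_deriv ?_
    rw [Pi.neg_apply]
    ring
  have hnn : ∀ t ∈ Set.Ico (0:ℝ) 1,
      0 ≤ (f' t + (a + b * t) / (1 - t ^ 2) * f t) * Real.exp (-G t) := by
    intro t ht
    apply mul_nonneg _ (Real.exp_nonneg _)
    have := hlb t ht
    linarith
  have hsub : Set.Icc r' r ⊆ Set.Ico (0:ℝ) 1 :=
    fun x hx => ⟨le_trans h0 hx.1, lt_of_le_of_lt hx.2 h2⟩
  have hmono : MonotoneOn h (Set.Icc r' r) := by
    apply monotoneOn_of_deriv_nonneg (convex_Icc r' r)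
    · intro x hx; exact (hhd x (hsub hx)).continuousAt.continuousWithinAt
    · intro x hx
      have hx' : x ∈ Set.Icc r' r := interior_subset hx
      exact (hhd x (hsub hx')).differentiableAt.differentiableWithinAt
    · intro x hx
      have hx' : x ∈ Set.Icc r' r := interior_subset hx
      rw [(hhd x (hsub hx')).deriv]
      exact hnn x (hsub hx')
  have key : h r' ≤ h r := hmono (Set.left_mem_Icc.mpr h1) (Set.right_mem_Icc.mpr h1) h1
  have hp1 : (0:ℝ) < 1 + r := by linarith
  have hp2 : (0:ℝ) < 1 + r' := by linarith
  have hm1 : (0:ℝ) < 1 - r := by linarith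
  have hm2 : (0:ℝ) < 1 - r' := by linarith
  have e1 : ((1 + r) / (1 + r')) ^ (-a)
      = Real.exp ((Real.log (1 + r) - Real.log (1 + r')) * (-a)) := by
    rw [Real.rpow_def_of_pos (div_pos hp1 hp2), Real.log_div (ne_of_gt hp1) (ne_of_gt hp2)]
  have e2 : ((1 - r ^ 2) / (1 - r' ^ 2)) ^ ((b + a) / 2)
      = Real.exp ((Real.log (1 - r) + Real.log (1 + r) - Real.log (1 - r') - Real.log (1 + r'))
          * ((b + a) / 2)) := by
    have hq1 : (0:ℝ) < 1 - r ^ 2 := by nlinarith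
    have hq2 : (0:ℝ) < 1 - r' ^ 2 := by nlinarith
    rw [Real.rpow_def_of_pos (div_pos hq1 hq2), Real.log_div (ne_of_gt hq1) (ne_of_gt hq2)]
    congr 2
    have e3 : 1 - r ^ 2 = (1 - r) * (1 + r) := by ring
    have e4 : 1 - r' ^ 2 = (1 - r') * (1 + r') := by ring
    rw [e3, Real.log_mul (ne_of_gt hm1) (ne_of_gt hp1),
        e4, Real.log_mul (ne_of_gt hm2) (ne_of_gt hp2)]
    ring
  have hGoal : Real.exp (G r - G r') * f r' ≤ f r := by
    have c1 : Real.exp (G r - G r') * f r' = (f r' * Real.exp (-G r')) * Real.exp (G r) := by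
      rw [Real.exp_sub, Real.exp_neg]
      field_simp
    have c2 : (f r * Real.exp (-G r)) * Real.exp (G r) = f r := by
      rw [Real.exp_neg]
      field_simp
    rw [c1, ← c2]
    have : (0:ℝ) < Real.exp (G r) := Real.exp_pos _
    exact mul_le_mul_of_nonneg_right key (le_of_lt this)
  rw [ge_iff_le, e1, e2, ← Real.exp_add]
  have hE : (Real.log (1 + r) - Real.log (1 + r')) * (-a)
      + (Real.log (1 - r) + Real.log (1 + r) - Real.log (1 - r') - Real.log (1 + r'))
        * ((b + a) / 2) = G r - G r' := by
    simp only [hG]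
    ring
  rw [hE]
  exact hGoal
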